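/- Massey's inequality: for any finite random variables X^n and Y^n, ∑_{i=1}^n I(X^i; Y_i | Y^{i-1}) ≤ I(X^n; Y^n), i.e., directed information is bounded above by mutual information. -/

import Mathlib

open Finset

namespace NFB

variable {Ω : Type*} [Fintype Ω]

/-- Probability that the finite random variable `X` (on finite sample space `Ω`
with weights `μ`) takes the value `a`. -/
noncomputable def pr (μ : Ω → ℝ) {α : Type*} [Fintype α] [DecidableEq α]
    (X : Ω → α) (a : α) : ℝ :=
  ∑ ω ∈ Finset.univ.filter (fun ω => X ω = a), μ ω

/-- Conditional probability `p(X = a | Y = b)`. -/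
noncomputable def condpr (μ : Ω → ℝ) {α β : Type*} [Fintype α] [DecidableEq α]
    [Fintype β] [DecidableEq β] (X : Ω → α) (Y : Ω → β) (a : α) (b : β) : ℝ :=
  pr μ (fun ω => (X ω, Y ω)) (a, b) / pr μ Y b

/-- Shannon entropy (base 2) of a finite random variable. -/
noncomputable def ent (μ : Ω → ℝ) {α : Type*} [Fintype α] [DecidableEq α]
    (X : Ω → α) : ℝ :=
  ∑ a : α, -(pr μ X a * Real.logb 2 (pr μ X a))

/-- Shannon entropy (base 2) of a distribution given directly as a weight function. -/
noncomputable def entD {γ : Type*} [Fintype γ] (p : γ → ℝ) : ℝ :=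
  ∑ c : γ, -(p c * Real.logb 2 (p c))

/-- Binary entropy function (base 2). -/
noncomputable def binent (a : ℝ) : ℝ :=
  -(a * Real.logb 2 a) - ((1 - a) * Real.logb 2 (1 - a))

/-- Conditional entropy `H(X | Y)`. -/
noncomputable def condent (μ : Ω → ℝ) {α β : Type*} [Fintype α] [DecidableEq α]
    [Fintype β] [DecidableEq β] (X : Ω → α) (Y : Ω → β) : ℝ :=
  ent μ (fun ω => (X ω, Y ω)) - ent μ Y

/-- Mutual information `I(X; Y)`. -/
noncomputable def mi (μ : Ω → ℝ) {α β : Type*} [Fintype α] [DecidableEq α]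
    [Fintype β] [DecidableEq β] (X : Ω → α) (Y : Ω → β) : ℝ :=
  ent μ X + ent μ Y - ent μ (fun ω => (X ω, Y ω))

/-- Conditional mutual information `I(X; Y | Z)`. -/
noncomputable def cmi (μ : Ω → ℝ) {α β γ : Type*} [Fintype α] [DecidableEq α]
    [Fintype β] [DecidableEq β] [Fintype γ] [DecidableEq γ]
    (X : Ω → α) (Y : Ω → β) (Z : Ω → γ) : ℝ :=
  condent μ X Z + condent μ Y Z - condent μ (fun ω => (X ω, Y ω)) Z

/-- The length-`i` prefix of a sequence `x : Fin n → α`. -/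
def pfx {α : Type*} {n : ℕ} (x : Fin n → α) (i : ℕ) (h : i ≤ n) : Fin i → α :=
  fun j => x (Fin.castLE h j)

/-- Directed information `I(Xⁿ → Yⁿ) = ∑ᵢ I(Xⁱ; Yᵢ | Yⁱ⁻¹)`. -/
noncomputable def dirinfo (μ : Ω → ℝ) {α β : Type*} [Fintype α] [DecidableEq α]
    [Fintype β] [DecidableEq β] {n : ℕ} (X : Ω → Fin n → α) (Y : Ω → Fin n → β) : ℝ :=
  ∑ i : Fin n, cmi μ (fun ω => pfx (X ω) (i.1 + 1) i.isLt)
    (fun ω => Y ω i) (fun ω => pfx (Y ω) i.1 i.isLt.le)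

/-- Conditional directed information `I(Xⁿ → Yⁿ | W) = ∑ᵢ I(Xⁱ; Yᵢ | Yⁱ⁻¹, W)`. -/
noncomputable def dirinfoCond (μ : Ω → ℝ) {α β γ : Type*} [Fintype α] [DecidableEq α]
    [Fintype β] [DecidableEq β] [Fintype γ] [DecidableEq γ]
    {n : ℕ} (X : Ω → Fin n → α) (Y : Ω → Fin n → β) (W : Ω → γ) : ℝ :=
  ∑ i : Fin n, cmi μ (fun ω => pfx (X ω) (i.1 + 1) i.isLt)
    (fun ω => Y ω i) (fun ω => (pfx (Y ω) i.1 i.isLt.le, W ω))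

/-- Causal conditional directed information
`I(Xⁿ → Yⁿ ‖ Zⁿ) = ∑ᵢ I(Xⁱ; Yᵢ | Yⁱ⁻¹, Zⁱ⁻¹)`. -/
noncomputable def dirinfoCausal (μ : Ω → ℝ) {α β γ : Type*} [Fintype α] [DecidableEq α]
    [Fintype β] [DecidableEq β] [Fintype γ] [DecidableEq γ]
    {n : ℕ} (X : Ω → Fin n → α) (Y : Ω → Fin n → β) (Z : Ω → Fin n → γ) : ℝ :=
  ∑ i : Fin n, cmi μ (fun ω => pfx (X ω) (i.1 + 1) i.isLt)
    (fun ω => Y ω i) (fun ω => (pfx (Y ω) i.1 i.isLt.le, pfx (Z ω) i.1 i.isLt.le))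

/-- Directed information from feedback to outputs
`I(Zⁿ⁻¹ → Yⁿ) = ∑ᵢ I(Zⁱ⁻¹; Yᵢ | Yⁱ⁻¹)`. -/
noncomputable def fbinfo (μ : Ω → ℝ) {ζ β : Type*} [Fintype ζ] [DecidableEq ζ]
    [Fintype β] [DecidableEq β] {n : ℕ} (Z : Ω → Fin n → ζ) (Y : Ω → Fin n → β) : ℝ :=
  ∑ i : Fin n, cmi μ (fun ω => pfx (Z ω) i.1 i.isLt.le)
    (fun ω => Y ω i) (fun ω => pfx (Y ω) i.1 i.isLt.le)

section Aux

variable (μ : Ω → ℝ) {α β γ δ : Type*} [Fintype α] [DecidableEq α]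
  [Fintype β] [DecidableEq β] [Fintype γ] [DecidableEq γ] [Fintype δ] [DecidableEq δ]

lemma pr_nonneg (hμ0 : ∀ ω, 0 ≤ μ ω) (X : Ω → α) (a : α) : 0 ≤ pr μ X a :=
  Finset.sum_nonneg fun ω _ => hμ0 ω

lemma sum_pr (hμ1 : ∑ ω, μ ω = 1) (X : Ω → α) : ∑ a, pr μ X a = 1 := by
  rw [← hμ1]; exact Finset.sum_fiberwise _ _ _

lemma pr_comp (X : Ω → α) (F : α → β) (b : β) :
    pr μ (fun ω => F (X ω)) b = ∑ a ∈ univ.filter (fun a => F a = b), pr μ X a := by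
  classical
  unfold pr
  rw [← Finset.sum_fiberwise (univ.filter (fun ω => F (X ω) = b)) X μ, Finset.sum_filter]
  refine Finset.sum_congr rfl fun a _ => ?_
  rw [Finset.filter_filter]
  by_cases h : F a = b
  · rw [if_pos h]
    apply Finset.sum_congr _ (fun _ _ => rfl)
    ext ω
    simp only [Finset.mem_filter, Finset.mem_univ, true_and]
    exact ⟨fun hh => hh.2, fun hh => ⟨by rw [hh, h], hh⟩⟩
  · rw [if_neg h]
    convert Finset.sum_empty (f := μ)
    ext ω
    simp only [Finset.mem_filter, Finset.mem_univ, true_and, Finset.notMem_empty, iff_false]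
    rintro ⟨h1, h2⟩
    exact h (h2 ▸ h1)

lemma sum_pr_comp (X : Ω → α) (F : α → β) (g : β → ℝ) :
    ∑ b, pr μ (fun ω => F (X ω)) b * g b = ∑ a, pr μ X a * g (F a) := by
  rw [← Finset.sum_fiberwise univ F (fun a => pr μ X a * g (F a))]
  refine Finset.sum_congr rfl fun b _ => ?_
  rw [pr_comp μ X F b, Finset.sum_mul]
  refine Finset.sum_congr rfl fun a ha => ?_
  rw [(Finset.mem_filter.mp ha).2]

lemma ent_comp (X : Ω → α) (F : α → β) :
    ent μ (fun ω => F (X ω)) =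
      ∑ a, -(pr μ X a * Real.logb 2 (pr μ (fun ω => F (X ω)) (F a))) := by
  rw [ent, Finset.sum_neg_distrib, Finset.sum_neg_distrib,
    sum_pr_comp μ X F (fun b => Real.logb 2 (pr μ (fun ω => F (X ω)) b))]

lemma pr_comp_inj (X : Ω → α) {f : α → β} (hf : Function.Injective f) (a : α) :
    pr μ (fun ω => f (X ω)) (f a) = pr μ X a := by
  unfold pr
  refine Finset.sum_congr ?_ (fun _ _ => rfl)
  apply Finset.filter_congr
  intro ω _
  simp [hf.eq_iff]

lemma ent_comp_inj (X : Ω → α) {f : α → β} (hf : Function.Injective f) :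
    ent μ (fun ω => f (X ω)) = ent μ X := by
  rw [ent_comp μ X f, ent]
  refine Finset.sum_congr rfl fun a _ => ?_
  rw [pr_comp_inj μ X hf a]

lemma pr_le_pr_comp (hμ0 : ∀ ω, 0 ≤ μ ω) (X : Ω → α) (F : α → β) (a : α) :
    pr μ X a ≤ pr μ (fun ω => F (X ω)) (F a) := by
  rw [pr_comp μ X F (F a)]
  exact Finset.single_le_sum (fun a' _ => pr_nonneg μ hμ0 X a') (by simp)

lemma sum_pr_pair_fst (A : Ω → α) (B : Ω → β) (b : β) :
    ∑ a, pr μ (fun ω => (A ω, B ω)) (a, b) = pr μ B b := by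
  have h : pr μ B b = pr μ (fun ω => Prod.snd ((fun ω => (A ω, B ω)) ω)) b := rfl
  rw [h, pr_comp]
  rw [show (univ.filter (fun p : α × β => Prod.snd p = b)) = univ ×ˢ {b} by
    ext p
    simp only [Finset.mem_filter, Finset.mem_univ, true_and, Finset.mem_product,
      Finset.mem_singleton]]
  rw [Finset.sum_product]
  simp

lemma gibbs {γ' : Type*} [Fintype γ'] (p q : γ' → ℝ) (hp : ∀ c, 0 ≤ p c)
    (hq : ∀ c, 0 ≤ q c) (hpq : ∀ c, p c ≠ 0 → q c ≠ 0)
    (hq1 : ∑ c, q c ≤ 1) (hp1 : ∑ c, p c = 1) :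
    ∑ c, p c * Real.logb 2 (q c) ≤ ∑ c, p c * Real.logb 2 (p c) := by
  have hlog2 : (0:ℝ) < Real.log 2 := Real.log_pos one_lt_two
  have key : ∀ c, p c * Real.logb 2 (q c) - p c * Real.logb 2 (p c)
      ≤ (q c - p c) / Real.log 2 := by
    intro c
    rcases eq_or_lt_of_le (hp c) with h0 | h0
    · rw [← h0]
      simp only [zero_mul, sub_zero, sub_self]
      exact div_nonneg (hq c) (Real.log_nonneg one_le_two)
    · have hqc : 0 < q c := (hq c).lt_of_ne (Ne.symm (hpq c (ne_of_gt h0)))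
      have h1 : Real.log (q c / p c) ≤ q c / p c - 1 :=
        Real.log_le_sub_one_of_pos (div_pos hqc h0)
      have h2 : p c * Real.log (q c / p c) ≤ q c - p c := by
        calc p c * Real.log (q c / p c) ≤ p c * (q c / p c - 1) :=
              mul_le_mul_of_nonneg_left h1 h0.le
          _ = q c - p c := by field_simp
      calc p c * Real.logb 2 (q c) - p c * Real.logb 2 (p c)
          = p c * Real.log (q c / p c) / Real.log 2 := by
            rw [Real.logb, Real.logb, Real.log_div hqc.ne' h0.ne']; ring
        _ ≤ (q c - p c) / Real.log 2 := by gcongr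
  have hsum : ∑ c, (p c * Real.logb 2 (q c) - p c * Real.logb 2 (p c))
      ≤ ∑ c, (q c - p c) / Real.log 2 := Finset.sum_le_sum fun c _ => key c
  rw [Finset.sum_sub_distrib] at hsum
  have h3 : ∑ c, (q c - p c) / Real.log 2 = (∑ c, q c - 1) / Real.log 2 := by
    rw [← Finset.sum_div, Finset.sum_sub_distrib, hp1]
  have h4 : (∑ c, q c - 1) / Real.log 2 ≤ 0 :=
    div_nonpos_iff.mpr (Or.inr ⟨by linarith, hlog2.le⟩)
  linarith


end Aux

section Aux2

variable (μ : Ω → ℝ) {α β γ δ : Type*} [Fintype α] [DecidableEq α]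
  [Fintype β] [DecidableEq β] [Fintype γ] [DecidableEq γ] [Fintype δ] [DecidableEq δ]

lemma cmi_nonneg (hμ0 : ∀ ω, 0 ≤ μ ω) (hμ1 : ∑ ω, μ ω = 1)
    (X : Ω → α) (Z : Ω → γ) (W : Ω → δ) : 0 ≤ cmi μ X Z W := by
  have hcmi : cmi μ X Z W = ent μ (fun ω => (X ω, W ω)) + ent μ (fun ω => (Z ω, W ω))
      - ent μ (fun ω => ((X ω, Z ω), W ω)) - ent μ W := by
    simp only [cmi, condent]; ring
  have e1 : ent μ (fun ω => (X ω, W ω)) = ∑ c : (α × γ) × δ,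
      -(pr μ (fun ω => ((X ω, Z ω), W ω)) c *
        Real.logb 2 (pr μ (fun ω => (X ω, W ω)) (c.1.1, c.2))) :=
    ent_comp μ (fun ω => ((X ω, Z ω), W ω)) (fun c => (c.1.1, c.2))
  have e2 : ent μ (fun ω => (Z ω, W ω)) = ∑ c : (α × γ) × δ,
      -(pr μ (fun ω => ((X ω, Z ω), W ω)) c *
        Real.logb 2 (pr μ (fun ω => (Z ω, W ω)) (c.1.2, c.2))) :=
    ent_comp μ (fun ω => ((X ω, Z ω), W ω)) (fun c => (c.1.2, c.2))
  have e3 : ent μ W = ∑ c : (α × γ) × δ,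
      -(pr μ (fun ω => ((X ω, Z ω), W ω)) c *
        Real.logb 2 (pr μ W c.2)) :=
    ent_comp μ (fun ω => ((X ω, Z ω), W ω)) (fun c => c.2)
  have e4 : ent μ (fun ω => ((X ω, Z ω), W ω)) = ∑ c : (α × γ) × δ,
      -(pr μ (fun ω => ((X ω, Z ω), W ω)) c *
        Real.logb 2 (pr μ (fun ω => ((X ω, Z ω), W ω)) c)) := rfl
  -- abbreviations
  set p : (α × γ) × δ → ℝ := pr μ (fun ω => ((X ω, Z ω), W ω)) with hp
  set q1 : α × δ → ℝ := pr μ (fun ω => (X ω, W ω)) with hq1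
  set q2 : γ × δ → ℝ := pr μ (fun ω => (Z ω, W ω)) with hq2
  set q3 : δ → ℝ := pr μ W with hq3
  have hpn : ∀ c, 0 ≤ p c := fun c => pr_nonneg μ hμ0 _ c
  have hq1n : ∀ c, 0 ≤ q1 c := fun c => pr_nonneg μ hμ0 _ c
  have hq2n : ∀ c, 0 ≤ q2 c := fun c => pr_nonneg μ hμ0 _ c
  have hq3n : ∀ c, 0 ≤ q3 c := fun c => pr_nonneg μ hμ0 _ c
  have hle1 : ∀ c : (α × γ) × δ, p c ≤ q1 (c.1.1, c.2) := fun c =>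
    pr_le_pr_comp μ hμ0 (fun ω => ((X ω, Z ω), W ω)) (fun c => (c.1.1, c.2)) c
  have hle2 : ∀ c : (α × γ) × δ, p c ≤ q2 (c.1.2, c.2) := fun c =>
    pr_le_pr_comp μ hμ0 (fun ω => ((X ω, Z ω), W ω)) (fun c => (c.1.2, c.2)) c
  have hle3 : ∀ c : (α × γ) × δ, p c ≤ q3 c.2 := fun c =>
    pr_le_pr_comp μ hμ0 (fun ω => ((X ω, Z ω), W ω)) (fun c => c.2) c
  set Q : (α × γ) × δ → ℝ := fun c => q1 (c.1.1, c.2) * q2 (c.1.2, c.2) / q3 c.2 with hQ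
  have key : ∀ c : (α × γ) × δ,
      -(p c * Real.logb 2 (q1 (c.1.1, c.2))) + -(p c * Real.logb 2 (q2 (c.1.2, c.2)))
        - -(p c * Real.logb 2 (p c)) - -(p c * Real.logb 2 (q3 c.2))
      = p c * Real.logb 2 (p c) - p c * Real.logb 2 (Q c) := by
    intro c
    rcases eq_or_lt_of_le (hpn c) with h0 | h0
    · rw [← h0]; ring
    · have hq1p : 0 < q1 (c.1.1, c.2) := lt_of_lt_of_le h0 (hle1 c)
      have hq2p : 0 < q2 (c.1.2, c.2) := lt_of_lt_of_le h0 (hle2 c)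
      have hq3p : 0 < q3 c.2 := lt_of_lt_of_le h0 (hle3 c)
      rw [hQ]
      rw [Real.logb_div (by positivity) hq3p.ne', Real.logb_mul hq1p.ne' hq2p.ne']
      ring
  have hmarg1 : ∀ w : δ, ∑ a, q1 (a, w) = q3 w := fun w => sum_pr_pair_fst μ X W w
  have hmarg2 : ∀ w : δ, ∑ z, q2 (z, w) = q3 w := fun w => sum_pr_pair_fst μ Z W w
  have inner : ∀ w : δ, ∑ x : α × γ, Q (x, w) = q3 w := by
    intro w
    have h1 : ∑ x : α × γ, Q (x, w) = ∑ a, ∑ z, q1 (a, w) * q2 (z, w) / q3 w := by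
      rw [Fintype.sum_prod_type]
    rw [h1]
    have hz : ∀ a : α, ∑ z, q1 (a, w) * q2 (z, w) / q3 w = q1 (a, w) * q3 w / q3 w := by
      intro a
      rw [← Finset.sum_div, ← Finset.mul_sum, hmarg2 w]
    rw [Finset.sum_congr rfl (fun a _ => hz a)]
    rw [show (∑ a, q1 (a, w) * q3 w / q3 w) = (∑ a, q1 (a, w)) * q3 w / q3 w by
      rw [← Finset.sum_div, ← Finset.sum_mul], hmarg1 w]
    rcases eq_or_ne (q3 w) 0 with h | h
    · simp [h]
    · field_simp
  have hsumQ : ∑ c : (α × γ) × δ, Q c = 1 := by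
    rw [show ∑ c : (α × γ) × δ, Q c = ∑ x : α × γ, ∑ w : δ, Q (x, w) from
      Fintype.sum_prod_type _]
    rw [Finset.sum_comm]
    rw [Finset.sum_congr rfl (fun w _ => inner w)]
    exact sum_pr μ hμ1 W
  have hQn : ∀ c, 0 ≤ Q c := fun c =>
    div_nonneg (mul_nonneg (hq1n _) (hq2n _)) (hq3n _)
  have hpq : ∀ c, p c ≠ 0 → Q c ≠ 0 := by
    intro c hc
    have h0 : 0 < p c := (hpn c).lt_of_ne (Ne.symm hc)
    exact (div_pos (mul_pos (lt_of_lt_of_le h0 (hle1 c)) (lt_of_lt_of_le h0 (hle2 c)))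
      (lt_of_lt_of_le h0 (hle3 c))).ne'
  have hgibbs := gibbs p Q hpn hQn hpq (le_of_eq hsumQ) (sum_pr μ hμ1 _)
  have hsplit : (∑ c : (α × γ) × δ, -(p c * Real.logb 2 (q1 (c.1.1, c.2))))
      + (∑ c : (α × γ) × δ, -(p c * Real.logb 2 (q2 (c.1.2, c.2))))
      - (∑ c : (α × γ) × δ, -(p c * Real.logb 2 (p c)))
      - (∑ c : (α × γ) × δ, -(p c * Real.logb 2 (q3 c.2)))
      = (∑ c : (α × γ) × δ, p c * Real.logb 2 (p c))
        - ∑ c : (α × γ) × δ, p c * Real.logb 2 (Q c) := by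
    rw [← Finset.sum_add_distrib, ← Finset.sum_sub_distrib, ← Finset.sum_sub_distrib,
      ← Finset.sum_sub_distrib]
    exact Finset.sum_congr rfl fun c _ => key c
  rw [hcmi, e1, e2, e3, e4, hsplit]
  linarith


lemma mi_add_cmi (X : Ω → α) (Y' : Ω → β) (Z : Ω → γ) :
    mi μ X (fun ω => (Y' ω, Z ω)) = mi μ X Y' + cmi μ X Z Y' := by
  have h1 : ent μ (fun ω => (Y' ω, Z ω)) = ent μ (fun ω => (Z ω, Y' ω)) :=
    (ent_comp_inj μ (fun ω => (Y' ω, Z ω)) (f := fun c => (c.2, c.1))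
      (by rintro ⟨z, y⟩ ⟨z', y'⟩ h; simp_all [Prod.ext_iff])).symm
  have h2 : ent μ (fun ω => (X ω, (Y' ω, Z ω))) = ent μ (fun ω => ((X ω, Z ω), Y' ω)) :=
    ent_comp_inj μ (fun ω => ((X ω, Z ω), Y' ω))
      (f := fun c => (c.1.1, (c.2, c.1.2)))
      (by rintro ⟨⟨x, z⟩, y⟩ ⟨⟨x', z'⟩, y'⟩ h; simp_all [Prod.ext_iff])
  simp only [mi, cmi, condent]
  linarith [h1, h2]

lemma cmi_comp_le (hμ0 : ∀ ω, 0 ≤ μ ω) (hμ1 : ∑ ω, μ ω = 1)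
    (X : Ω → α) (Z : Ω → γ) (W : Ω → δ) (g : α → β) :
    cmi μ (fun ω => g (X ω)) Z W ≤ cmi μ X Z W := by
  have h0 : 0 ≤ cmi μ X Z (fun ω => (g (X ω), W ω)) := cmi_nonneg μ hμ0 hμ1 X Z _
  have e1 : ent μ (fun ω => (X ω, (g (X ω), W ω))) = ent μ (fun ω => (X ω, W ω)) :=
    ent_comp_inj μ (fun ω => (X ω, W ω)) (f := fun c => (c.1, (g c.1, c.2)))
      (by rintro ⟨x, w⟩ ⟨x', w'⟩ h; simp_all [Prod.ext_iff])
  have e2 : ent μ (fun ω => (Z ω, (g (X ω), W ω)))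
      = ent μ (fun ω => ((g (X ω), Z ω), W ω)) :=
    ent_comp_inj μ (fun ω => ((g (X ω), Z ω), W ω))
      (f := fun c => (c.1.2, (c.1.1, c.2)))
      (by rintro ⟨⟨u, z⟩, w⟩ ⟨⟨u', z'⟩, w'⟩ h; simp_all [Prod.ext_iff])
  have e3 : ent μ (fun ω => ((X ω, Z ω), (g (X ω), W ω)))
      = ent μ (fun ω => ((X ω, Z ω), W ω)) :=
    ent_comp_inj μ (fun ω => ((X ω, Z ω), W ω))
      (f := fun c => (c.1, (g c.1.1, c.2)))
      (by rintro ⟨⟨x, z⟩, w⟩ ⟨⟨x', z'⟩, w'⟩ h; simp_all [Prod.ext_iff])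
  simp only [cmi, condent] at h0 ⊢
  linarith [h0, e1, e2, e3]

lemma mi_comp_right (X : Ω → α) (Y : Ω → β) {f : β → γ} (hf : Function.Injective f) :
    mi μ X (fun ω => f (Y ω)) = mi μ X Y := by
  have h1 : ent μ (fun ω => f (Y ω)) = ent μ Y := ent_comp_inj μ Y hf
  have h2 : ent μ (fun ω => (X ω, f (Y ω))) = ent μ (fun ω => (X ω, Y ω)) :=
    ent_comp_inj μ (fun ω => (X ω, Y ω)) (f := fun c => (c.1, f c.2))
      (by rintro ⟨x, y⟩ ⟨x', y'⟩ h; simp_all [Prod.ext_iff]; exact hf h.2)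
  simp only [mi]
  rw [h1, h2]

lemma ent_unique {κ : Type*} [Fintype κ] [DecidableEq κ] [Unique κ]
    (hμ1 : ∑ ω, μ ω = 1) (C : Ω → κ) : ent μ C = 0 := by
  rw [ent, Fintype.sum_unique]
  have h : pr μ C default = 1 := by
    rw [pr, Finset.filter_true_of_mem (fun ω _ => Unique.eq_default _), hμ1]
  simp [h]

lemma mi_unique {κ : Type*} [Fintype κ] [DecidableEq κ] [Unique κ]
    (hμ1 : ∑ ω, μ ω = 1) (X : Ω → α) (C : Ω → κ) : mi μ X C = 0 := by
  have h1 : ent μ C = 0 := ent_unique μ hμ1 C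
  have h2 : ent μ (fun ω => (X ω, C ω)) = ent μ X := by
    have hC : (fun ω => (X ω, C ω)) = fun ω => (X ω, (default : κ)) := by
      funext ω; rw [Unique.eq_default (C ω)]
    rw [hC]
    exact ent_comp_inj μ X (f := fun a => (a, (default : κ)))
      (fun a b h => by simpa using congrArg Prod.fst h)
  simp only [mi]
  rw [h1, h2]
  ring


end Aux2


/-- Massey's inequality: for any finite random variables `Xⁿ` and
`Yⁿ`, the directed information `∑ᵢ I(Xⁱ; Yᵢ | Yⁱ⁻¹)` is bounded above by the
mutual information `I(Xⁿ; Yⁿ)`. -/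
theorem stmt5 {Ω : Type*} [Fintype Ω] (μ : Ω → ℝ)
    (hμ0 : ∀ ω, 0 ≤ μ ω) (hμ1 : ∑ ω, μ ω = 1)
    {α β : Type*} [Fintype α] [DecidableEq α] [Fintype β] [DecidableEq β]
    {n : ℕ} (X : Ω → Fin n → α) (Y : Ω → Fin n → β) :
    dirinfo μ X Y ≤ mi μ X Y := by
  -- `t i` : the fully-informed conditional mutual information terms
  set t : Fin n → ℝ := fun i =>
    cmi μ X (fun ω => Y ω i) (fun ω => pfx (Y ω) i.1 i.isLt.le) with ht
  -- telescoping chain rule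
  have main : ∀ k, ∀ hk : k ≤ n, mi μ X (fun ω => pfx (Y ω) k hk) =
      ∑ i : Fin n, if i.1 < k then t i else 0 := by
    intro k
    induction k with
    | zero =>
      intro hk
      simp only [Nat.not_lt_zero, if_false, Finset.sum_const_zero]
      exact mi_unique μ hμ1 X _
    | succ k IH =>
      intro hk
      have hk' : k ≤ n := Nat.le_of_succ_le hk
      have hkn : k < n := hk
      -- injective decomposition of a (k+1)-prefix into (k-prefix, last entry)
      have hg : Function.Injective
          (fun y : Fin (k+1) → β => ((fun j : Fin k => y j.castSucc), y (Fin.last k))) := by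
        intro y1 y2 h
        have h1 : (fun j : Fin k => y1 j.castSucc) = fun j : Fin k => y2 j.castSucc :=
          congrArg Prod.fst h
        have h2 : y1 (Fin.last k) = y2 (Fin.last k) := congrArg Prod.snd h
        funext j
        rcases Nat.lt_or_ge j.1 k with hj | hj
        · exact congrFun h1 ⟨j.1, hj⟩
        · have : j = Fin.last k := Fin.ext (le_antisymm (Nat.lt_succ_iff.mp j.isLt) hj)
          rw [this]; exact h2
      have e0 := mi_comp_right μ X (fun ω => pfx (Y ω) (k+1) hk) hg
      have hfeq : (fun ω => ((fun j : Fin k => pfx (Y ω) (k+1) hk j.castSucc),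
            pfx (Y ω) (k+1) hk (Fin.last k)))
          = (fun ω => (pfx (Y ω) k hk', Y ω ⟨k, hkn⟩)) := by
        funext ω
        refine Prod.ext ?_ ?_
        · funext j; rfl
        · rfl
      rw [hfeq] at e0
      have e : mi μ X (fun ω => (pfx (Y ω) k hk', Y ω ⟨k, hkn⟩))
          = mi μ X (fun ω => pfx (Y ω) (k+1) hk) := e0
      have echain := mi_add_cmi μ X (fun ω => pfx (Y ω) k hk') (fun ω => Y ω ⟨k, hkn⟩)
      have hsum : ∑ i : Fin n, (if i.1 < k + 1 then t i else 0)
          = (∑ i : Fin n, if i.1 < k then t i else 0)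
            + ∑ i : Fin n, if i = (⟨k, hkn⟩ : Fin n) then t i else 0 := by
        rw [← Finset.sum_add_distrib]
        refine Finset.sum_congr rfl fun i _ => ?_
        by_cases h2 : i = (⟨k, hkn⟩ : Fin n)
        · subst h2
          simp [Nat.lt_irrefl]
        · have hik : i.1 ≠ k := fun h => h2 (Fin.ext h)
          by_cases h1 : i.1 < k
          · simp [h1, Nat.lt_succ_of_lt h1, h2]
          · have h3 : ¬ i.1 < k + 1 := by omega
            simp [h1, h3, h2]
      have hlast : ∑ i : Fin n, (if i = (⟨k, hkn⟩ : Fin n) then t i else 0)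
          = t ⟨k, hkn⟩ := by
        rw [Finset.sum_ite_eq' Finset.univ (⟨k, hkn⟩ : Fin n) t]
        simp
      have htk : t ⟨k, hkn⟩
          = cmi μ X (fun ω => Y ω ⟨k, hkn⟩) (fun ω => pfx (Y ω) k hk') := by
        rw [ht]
      rw [← e, echain, IH hk', hsum, hlast, htk]
  -- each directed-information term is dominated by the fully-informed term
  have hterm : ∀ i : Fin n, cmi μ (fun ω => pfx (X ω) (i.1 + 1) i.isLt)
      (fun ω => Y ω i) (fun ω => pfx (Y ω) i.1 i.isLt.le) ≤ t i := fun i =>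
    cmi_comp_le μ hμ0 hμ1 X (fun ω => Y ω i) (fun ω => pfx (Y ω) i.1 i.isLt.le)
      (fun x => pfx x (i.1 + 1) i.isLt)
  have hfull : mi μ X Y = ∑ i : Fin n, t i := by
    have h0 : (fun ω => pfx (Y ω) n le_rfl) = Y := by
      funext ω j; rfl
    have h1 : mi μ X (fun ω => pfx (Y ω) n le_rfl) = mi μ X Y := by rw [h0]
    rw [← h1, main n le_rfl]
    exact Finset.sum_congr rfl fun i _ => by simp [i.isLt]
  rw [dirinfo, hfull]
  exact Finset.sum_le_sum fun i _ => hterm i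

end NFB
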